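/- Let n ≥ 2 be even, let σ be any probability distribution on U, and set P = Σ_{u ∈ U} σ(u) · u uᵀ ∈ ℝ^{n×n}. Then the supremum over y ∈ ℝⁿ with Σ_{i=1}^n y_i = 0 and y ≠ 0 of [ Σ_{u ∈ U} σ(u) ((2/n) Σ_{i=1}^n u_i y_i)² ] / [ (4/(n(n−1))) Σ_{i=1}^n y_i² ] equals (1 − 1/n) λ_max(P), where λ_max denotes the largest eigenvalue. (The worst-case variance ratio of a design relative to complete randomization is (1 − 1/n) times the top eigenvalue of its P matrix.) -/

import Mathlib

open scoped Classical BigOperators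

/-- The ±1 sign associated to a boolean assignment: `true ↦ 1`, `false ↦ -1`. -/
noncomputable def sgn {n : ℕ} (u : Fin n → Bool) (i : Fin n) : ℝ :=
  if u i then 1 else -1

/-- The set `U` of balanced ±1 assignment vectors: `u ∈ {−1,1}ⁿ` with `∑ i, u i = 0`. -/
noncomputable def balancedAssignments (n : ℕ) : Finset (Fin n → Bool) :=
  Finset.univ.filter (fun u => ∑ i, sgn u i = 0)

open Matrix in
lemma quadform_aux {n : ℕ} (σ : (Fin n → Bool) → ℝ) (U : Finset (Fin n → Bool))
    (s : (Fin n → Bool) → Fin n → ℝ)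
    (P : Matrix (Fin n) (Fin n) ℝ)
    (hPdef : ∀ i j, P i j = ∑ u ∈ U, σ u * (s u i * s u j))
    (x : Fin n → ℝ) :
    x ⬝ᵥ P *ᵥ x = ∑ u ∈ U, σ u * (∑ i, s u i * x i) ^ 2 := by
  have h1 : x ⬝ᵥ P *ᵥ x = ∑ i, ∑ j, ∑ u ∈ U, σ u * ((s u i * x i) * (s u j * x j)) := by
    simp only [dotProduct, mulVec, hPdef, Finset.sum_mul, Finset.mul_sum]
    exact Finset.sum_congr rfl fun i _ => Finset.sum_congr rfl fun j _ =>
      Finset.sum_congr rfl fun u _ => by ring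
  have h2 : ∀ i : Fin n, ∑ j, ∑ u ∈ U, σ u * ((s u i * x i) * (s u j * x j))
      = ∑ u ∈ U, ∑ j, σ u * ((s u i * x i) * (s u j * x j)) := fun i => Finset.sum_comm
  rw [h1]
  simp_rw [h2]
  rw [Finset.sum_comm]
  refine Finset.sum_congr rfl fun u _ => ?_
  rw [sq, Finset.sum_mul_sum, Finset.mul_sum]
  refine Finset.sum_congr rfl fun i _ => ?_
  rw [Finset.mul_sum]

open Matrix in
lemma rayleigh_le_aux {n : ℕ} (P : Matrix (Fin n) (Fin n) ℝ)
    (hP : P.IsHermitian) (x : Fin n → ℝ) :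
    x ⬝ᵥ P *ᵥ x ≤ (⨆ i, hP.eigenvalues i) * (x ⬝ᵥ x) := by
  set lam := ⨆ i, hP.eigenvalues i with hlam
  set V : Matrix (Fin n) (Fin n) ℝ := (hP.eigenvectorUnitary : Matrix (Fin n) (Fin n) ℝ) with hV
  have hstar : star V = Vᵀ := by
    ext i j; simp [Matrix.star_apply]
  set c : Fin n → ℝ := Vᵀ *ᵥ x with hc
  have hVVt : V * Vᵀ = 1 := by
    rw [← hstar]; exact (Matrix.mem_unitaryGroup_iff).mp hP.eigenvectorUnitary.2
  have hdot : ∀ w : Fin n → ℝ, x ⬝ᵥ (V *ᵥ w) = c ⬝ᵥ w := by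
    intro w
    rw [dotProduct_mulVec, hc, mulVec_transpose]
  have key : x ⬝ᵥ P *ᵥ x = ∑ i, hP.eigenvalues i * (c i) ^ 2 := by
    conv_lhs => rw [hP.spectral_theorem, Unitary.conjStarAlgAut_apply]
    rw [← Matrix.mulVec_mulVec, ← Matrix.mulVec_mulVec, hstar, ← hc, hdot]
    simp only [dotProduct, mulVec_diagonal, Function.comp_apply, RCLike.ofReal_real_eq_id,
      id_eq]
    exact Finset.sum_congr rfl fun i _ => by ring
  have hcc : c ⬝ᵥ c = x ⬝ᵥ x := by
    rw [hc]
    rw [dotProduct_mulVec (Vᵀ *ᵥ x) Vᵀ x, vecMul_transpose, Matrix.mulVec_mulVec, hVVt,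
      one_mulVec]
  have hle : ∀ i, hP.eigenvalues i ≤ lam := fun i =>
    le_ciSup (Set.Finite.bddAbove (Set.finite_range _)) i
  calc x ⬝ᵥ P *ᵥ x = ∑ i, hP.eigenvalues i * (c i) ^ 2 := key
    _ ≤ ∑ i, lam * (c i) ^ 2 := Finset.sum_le_sum fun i _ =>
        mul_le_mul_of_nonneg_right (hle i) (sq_nonneg _)
    _ = lam * (c ⬝ᵥ c) := by
        rw [dotProduct, Finset.mul_sum]
        exact Finset.sum_congr rfl fun i _ => by ring
    _ = lam * (x ⬝ᵥ x) := by rw [hcc]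

open Matrix in
/-- The worst-case variance ratio of a design relative to complete randomization is
`(1 − 1/n)` times the top eigenvalue of its matrix `P = ∑_{u ∈ U} σ(u) u uᵀ`. -/
theorem stmt18 (n : ℕ) (hn : 2 ≤ n) (hne : Even n)
    (σ : (Fin n → Bool) → ℝ)
    (hσ0 : ∀ u ∈ balancedAssignments n, 0 ≤ σ u)
    (hσ1 : ∑ u ∈ balancedAssignments n, σ u = 1)
    (P : Matrix (Fin n) (Fin n) ℝ)
    (hPdef : ∀ i j, P i j = ∑ u ∈ balancedAssignments n, σ u * (sgn u i * sgn u j))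
    (hP : P.IsHermitian) :
    sSup {r : ℝ | ∃ y : Fin n → ℝ, (∑ i, y i = 0) ∧ y ≠ 0 ∧
        r = (∑ u ∈ balancedAssignments n,
              σ u * ((2 / (n : ℝ)) * ∑ i, sgn u i * y i) ^ 2) /
            ((4 / ((n : ℝ) * ((n : ℝ) - 1))) * ∑ i, (y i) ^ 2)}
      = (1 - 1 / (n : ℝ)) * ⨆ i, hP.eigenvalues i := by
  classical
  have hn2 : (2:ℝ) ≤ (n:ℝ) := by exact_mod_cast hn
  have hn0 : (0:ℝ) < (n:ℝ) := by linarith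
  have hn1 : (0:ℝ) < (n:ℝ) - 1 := by linarith
  haveI : Nonempty (Fin n) := ⟨⟨0, by omega⟩⟩
  set U := balancedAssignments n with hU
  set lam := ⨆ i, hP.eigenvalues i with hlam
  set Q : (Fin n → ℝ) → ℝ := fun x => ∑ u ∈ U, σ u * (∑ i, sgn u i * x i) ^ 2 with hQ
  have hquadP : ∀ x, x ⬝ᵥ P *ᵥ x = Q x := fun x => quadform_aux σ U sgn P hPdef x
  have hQnn : ∀ x, 0 ≤ Q x := fun x =>
    Finset.sum_nonneg fun u hu => mul_nonneg (hσ0 u hu) (sq_nonneg _)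
  have hray : ∀ x : Fin n → ℝ, Q x ≤ lam * (∑ i, (x i) ^ 2) := by
    intro x
    have h := rayleigh_le_aux P hP x
    rw [hquadP] at h
    have hd : x ⬝ᵥ x = ∑ i, (x i) ^ 2 := by
      simp [dotProduct, sq]
    rwa [hd] at h
  -- top eigenvalue is attained
  obtain ⟨i₀, hi₀⟩ := Finite.exists_max hP.eigenvalues
  have hlam_eq : lam = hP.eigenvalues i₀ :=
    le_antisymm (ciSup_le hi₀) (le_ciSup (Set.Finite.bddAbove (Set.finite_range _)) i₀)
  set v : Fin n → ℝ := ⇑(hP.eigenvectorBasis i₀) with hv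
  have hveig : P *ᵥ v = lam • v := by
    rw [hlam_eq]; exact hP.mulVec_eigenvectorBasis i₀
  have hvnorm : ∑ i, (v i) ^ 2 = 1 := by
    have h1 : ‖hP.eigenvectorBasis i₀‖ = 1 := hP.eigenvectorBasis.orthonormal.1 i₀
    have h2 := EuclideanSpace.norm_eq (hP.eigenvectorBasis i₀)
    rw [h1] at h2
    have h3 : ∑ i, ‖(hP.eigenvectorBasis i₀) i‖ ^ 2 = 1 := Real.sqrt_eq_one.mp h2.symm
    simpa [Real.norm_eq_abs, sq_abs] using h3
  have hvQ : Q v = lam := by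
    rw [← hquadP, hveig]
    simp only [dotProduct, Pi.smul_apply, smul_eq_mul]
    have : ∑ i, v i * (lam * v i) = lam * ∑ i, (v i) ^ 2 := by
      rw [Finset.mul_sum]; exact Finset.sum_congr rfl fun i _ => by ring
    rw [this, hvnorm, mul_one]
  have hvne : v ≠ 0 := by
    intro h
    rw [h] at hvnorm
    simp at hvnorm
  have hlam_nn : 0 ≤ lam := hvQ ▸ hQnn v
  -- column sums of P vanish
  have hUsum : ∀ u ∈ U, ∑ i, sgn u i = 0 := fun u hu => (Finset.mem_filter.mp hu).2
  have hPsum : ∀ i, ∑ j, P i j = 0 := by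
    intro i
    simp only [hPdef]
    rw [Finset.sum_comm]
    apply Finset.sum_eq_zero
    intro u hu
    have h : ∑ j, σ u * (sgn u i * sgn u j) = (σ u * sgn u i) * ∑ j, sgn u j := by
      rw [Finset.mul_sum]; exact Finset.sum_congr rfl fun j _ => by ring
    rw [h, hUsum u hu, mul_zero]
  have hsymm : ∀ i j, P i j = P j i := fun i j => by
    rw [hPdef, hPdef]; exact Finset.sum_congr rfl fun u _ => by ring
  -- numerator rewrite
  have hnum : ∀ y : Fin n → ℝ,
      (∑ u ∈ U, σ u * ((2 / (n:ℝ)) * ∑ i, sgn u i * y i) ^ 2) = (2 / (n:ℝ)) ^ 2 * Q y := by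
    intro y
    rw [hQ, Finset.mul_sum]
    exact Finset.sum_congr rfl fun u _ => by ring
  have hconst : (1 - 1 / (n:ℝ)) * (4 / ((n:ℝ) * ((n:ℝ) - 1))) = (2 / (n:ℝ)) ^ 2 := by
    field_simp
    ring
  -- upper bound for all elements of the set
  have hub : ∀ r ∈ {r : ℝ | ∃ y : Fin n → ℝ, (∑ i, y i = 0) ∧ y ≠ 0 ∧
        r = (∑ u ∈ U, σ u * ((2 / (n : ℝ)) * ∑ i, sgn u i * y i) ^ 2) /
            ((4 / ((n : ℝ) * ((n : ℝ) - 1))) * ∑ i, (y i) ^ 2)},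
      r ≤ (1 - 1 / (n:ℝ)) * lam := by
    rintro r ⟨y, hy0, hyne, rfl⟩
    have hSpos : 0 < ∑ i, (y i) ^ 2 := by
      rcases Function.ne_iff.mp hyne with ⟨i, hi⟩
      exact Finset.sum_pos' (fun j _ => sq_nonneg _)
        ⟨i, Finset.mem_univ i, by have h' : y i ≠ 0 := hi; positivity⟩
    rw [hnum, div_le_iff₀ (by positivity)]
    calc (2 / (n:ℝ)) ^ 2 * Q y
        ≤ (2 / (n:ℝ)) ^ 2 * (lam * ∑ i, (y i) ^ 2) :=
          mul_le_mul_of_nonneg_left (hray y) (by positivity)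
      _ = (1 - 1 / (n:ℝ)) * lam * ((4 / ((n:ℝ) * ((n:ℝ) - 1))) * ∑ i, (y i) ^ 2) := by
          rw [← hconst]; ring
  -- the value is attained
  have hmem : (1 - 1 / (n:ℝ)) * lam ∈ {r : ℝ | ∃ y : Fin n → ℝ, (∑ i, y i = 0) ∧ y ≠ 0 ∧
        r = (∑ u ∈ U, σ u * ((2 / (n : ℝ)) * ∑ i, sgn u i * y i) ^ 2) /
            ((4 / ((n : ℝ) * ((n : ℝ) - 1))) * ∑ i, (y i) ^ 2)} := by
    rcases eq_or_lt_of_le hlam_nn with hz | hpos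
    · -- lam = 0
      set a : Fin n := ⟨0, by omega⟩
      set b : Fin n := ⟨1, by omega⟩
      have hab : a ≠ b := by simp [a, b, Fin.ext_iff]
      set y : Fin n → ℝ := Pi.single a 1 - Pi.single b 1 with hy
      have hysum : ∑ i, y i = 0 := by
        simp [hy, Finset.sum_sub_distrib, Finset.sum_pi_single']
      have hyne : y ≠ 0 := by
        intro h
        have := congrFun h a
        simp [hy, Pi.single_apply, hab] at this
      have hQy : Q y = 0 := by
        refine le_antisymm ?_ (hQnn y)
        have := hray y
        rw [← hz] at this
        simpa using this
      exact ⟨y, hysum, hyne, by rw [hnum, hQy, mul_zero, zero_div, ← hz, mul_zero]⟩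
    · -- lam > 0 : use the top eigenvector
      have hsumv : ∑ i, v i = 0 := by
        have h1 : ∑ i, (P *ᵥ v) i = lam * ∑ i, v i := by
          rw [hveig]; simp [Finset.mul_sum]
        have h2 : ∑ i, (P *ᵥ v) i = 0 := by
          simp only [mulVec, dotProduct]
          rw [Finset.sum_comm]
          apply Finset.sum_eq_zero
          intro j _
          have : ∑ i, P i j * v j = (∑ i, P i j) * v j := by rw [Finset.sum_mul]
          rw [this]
          have hcol : ∑ i, P i j = 0 := by
            rw [Finset.sum_congr rfl fun i _ => hsymm i j]
            exact hPsum j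
          rw [hcol, zero_mul]
        have := h1.symm.trans h2
        exact (mul_eq_zero.mp this).resolve_left (ne_of_gt hpos)
      refine ⟨v, hsumv, hvne, ?_⟩
      rw [hnum, hvQ, hvnorm, mul_one, eq_div_iff (by positivity), ← hconst]
      ring
  refine le_antisymm ?_ (le_csSup ⟨_, hub⟩ hmem)
  refine Real.sSup_le hub (mul_nonneg ?_ hlam_nn)
  have : 1 / (n:ℝ) ≤ 1 := by
    rw [div_le_one hn0]; linarith
  linarith
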